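/- arXiv:2011.08015 — 2 statements merged into one kernel-verified Lean document; each statement's English description precedes it below -/
import Mathlib

section
/- Let Td(n; d_1,…,d_r) be the Todd genus of the complete intersection X_n(d_1,…,d_r), given by Td(n; d) = Σ_{j=0}^{r} (-1)^{n+r+j} Σ_{1 ≤ k_1 < ⋯ < k_j ≤ r} C(-1 + d_{k_1} + ⋯ + d_{k_j}, n+r). If c_1 := n + r + 1 - Σ_{i=1}^{r} d_i < 0 and all d_i > 1, then (-1)^n · Td(n; d_1,…,d_r) ≥ n + r. -/
open Finset

/-- Generalized binomial coefficient `C(a, k) = a(a-1)⋯(a-k+1)/k!`. -/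
def gbc (a : ℚ) (k : ℕ) : ℚ :=
  (∏ i ∈ Finset.range k, (a - i)) / (Nat.factorial k)

lemma gbc_zero (a : ℚ) : gbc a 0 = 1 := by simp [gbc]

lemma gbc_natCast (a n : ℕ) : gbc (a : ℚ) n = (a.choose n : ℚ) := by
  have h : ∏ i ∈ Finset.range n, ((a : ℚ) - i) = (a.descFactorial n : ℚ) := by
    induction n with
    | zero => simp
    | succ k ih =>
      rw [Finset.prod_range_succ, ih, Nat.descFactorial_succ]
      rcases le_or_gt (k+1) a with h1 | h1
      · push_cast [Nat.cast_sub (by omega : k ≤ a)]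
        ring
      · rcases lt_or_eq_of_le (Nat.lt_succ_iff.mp h1) with h2 | h2
        · simp [Nat.descFactorial_eq_zero_iff_lt.mpr h2]
        · subst h2
          simp [Nat.descFactorial_eq_zero_iff_lt.mpr (by omega : a < a + 1)]
  rw [gbc, h, Nat.descFactorial_eq_factorial_mul_choose]
  push_cast
  rw [mul_comm, mul_div_assoc, div_self (by positivity), mul_one]

lemma gbc_neg_one (n : ℕ) : gbc (-1) n = (-1)^n := by
  have h : ∏ i ∈ Finset.range n, ((-1 : ℚ) - i) = (-1)^n * (Nat.factorial n : ℚ) := by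
    induction n with
    | zero => simp
    | succ k ih =>
      rw [Finset.prod_range_succ, ih, Nat.factorial_succ]
      push_cast
      ring
  rw [gbc, h, mul_div_assoc, div_self (by positivity), mul_one]

lemma gbc_int_nonneg {x : ℤ} (n : ℕ) (hx : 0 ≤ x) : 0 ≤ gbc (x:ℚ) n := by
  lift x to ℕ using hx
  rw [Int.cast_natCast, gbc_natCast]
  positivity

lemma gbc_pascal (a : ℚ) (n : ℕ) : gbc a (n+1) = gbc (a-1) (n+1) + gbc (a-1) n := by
  have h1 : ∏ i ∈ Finset.range (n+1), (a - i) = a * ∏ i ∈ Finset.range n, (a - 1 - i) := by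
    rw [Finset.prod_range_succ']
    have : ∀ i ∈ Finset.range n, (a - ((i:ℚ)+1)) = (a - 1 - i) := by
      intro i _; ring
    rw [Finset.prod_congr rfl (fun i hi => by rw [show ((i+1 : ℕ):ℚ) = (i:ℚ)+1 by push_cast; ring, this i hi])]
    push_cast
    ring
  have h2 : ∏ i ∈ Finset.range (n+1), (a - 1 - i) =
      (∏ i ∈ Finset.range n, (a - 1 - i)) * (a - 1 - n) := Finset.prod_range_succ _ _
  rw [gbc, gbc, gbc, h1, h2]
  have hn : (Nat.factorial n : ℚ) ≠ 0 := by positivity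
  have hn1 : (Nat.factorial (n+1) : ℚ) ≠ 0 := by positivity
  rw [Nat.factorial_succ]
  push_cast
  field_simp
  ring

lemma gbc_telescope (x : ℚ) (n c : ℕ) :
    gbc x (n+1) - gbc (x - c) (n+1) = ∑ a ∈ Finset.range c, gbc (x - 1 - a) n := by
  induction c with
  | zero => simp
  | succ k ih =>
    rw [Finset.sum_range_succ, ← ih]
    have := gbc_pascal (x - k) n
    push_cast
    have harg : x - (k:ℚ) - 1 = x - 1 - k := by ring
    rw [harg] at this
    have harg2 : x - ((k:ℚ)+1) = x - 1 - k := by ring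
    rw [harg2, this]
    ring

section Aux

variable {ι : Type*} [DecidableEq ι]



def G (m : ι → ℕ) (n : ℕ) (s : Finset ι) (x : ℚ) : ℚ :=
  ∑ T ∈ s.powerset, (-1)^T.card * gbc (x - ∑ i ∈ T, (m i : ℚ)) (n + s.card)

lemma G_empty (m : ι → ℕ) (n : ℕ) (x : ℚ) : G m n ∅ x = gbc x n := by
  simp [G]

lemma G_insert (m : ι → ℕ) (n : ℕ) {j : ι} {s : Finset ι} (hj : j ∉ s) (x : ℚ) :
    G m n (insert j s) x = ∑ a ∈ Finset.range (m j), G m n s (x - 1 - a) := by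
  rw [G, Finset.sum_powerset_insert hj]
  have hcard : (insert j s).card = s.card + 1 := Finset.card_insert_of_notMem hj
  have step : ∀ T ∈ s.powerset,
      (-1:ℚ)^T.card * gbc (x - ∑ i ∈ T, (m i : ℚ)) (n + (insert j s).card)
      + (-1:ℚ)^(insert j T).card * gbc (x - ∑ i ∈ (insert j T), (m i : ℚ)) (n + (insert j s).card)
      = ∑ a ∈ Finset.range (m j), (-1:ℚ)^T.card * gbc (x - ∑ i ∈ T, (m i : ℚ) - 1 - a) (n + s.card) := by
    intro T hT
    have hjT : j ∉ T := fun h => hj (Finset.mem_powerset.mp hT h)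
    rw [Finset.card_insert_of_notMem hjT, Finset.sum_insert hjT, hcard]
    rw [pow_succ]
    have : x - ((m j : ℚ) + ∑ i ∈ T, (m i : ℚ)) = (x - ∑ i ∈ T, (m i : ℚ)) - (m j : ℚ) := by ring
    rw [this]
    rw [show n + (s.card + 1) = (n + s.card) + 1 from rfl]
    rw [← Finset.mul_sum, ← gbc_telescope (x - ∑ i ∈ T, (m i : ℚ)) (n + s.card) (m j)]
    ring
  rw [← Finset.sum_add_distrib, Finset.sum_congr rfl step, Finset.sum_comm]
  apply Finset.sum_congr rfl
  intro a _
  rw [G, Finset.sum_congr rfl]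
  intro T _
  congr 1
  ring

-- I1 : nonnegativity
lemma G_nonneg (m : ι → ℕ) (n : ℕ) (s : Finset ι) :
    ∀ x : ℤ, ((∑ i ∈ s, m i : ℕ) : ℤ) ≤ x → 0 ≤ G m n s (x : ℚ) := by
  induction s using Finset.induction_on with
  | empty =>
    intro x hx
    rw [G_empty]
    exact gbc_int_nonneg n (by simpa using hx)
  | @insert j s hj ih =>
    intro x hx
    rw [G_insert m n hj]
    apply Finset.sum_nonneg
    intro a ha
    have ha' : (a:ℤ) < m j := by exact_mod_cast Finset.mem_range.mp ha
    have : ((x : ℚ) - 1 - a) = (((x - 1 - a : ℤ)) : ℚ) := by push_cast; ring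
    rw [this]
    apply ih
    rw [Finset.sum_insert hj] at hx
    push_cast at hx ⊢
    omega

-- I2 : bottom value bound
lemma G_bottom (m : ι → ℕ) (n : ℕ) (s : Finset ι) (h1 : ∀ i ∈ s, 1 ≤ m i) :
    (-1:ℚ)^n ≤ G m n s ((((∑ i ∈ s, m i : ℕ) : ℤ) - 1 : ℤ) : ℚ) := by
  induction s using Finset.induction_on with
  | empty =>
    rw [G_empty]
    simp only [Finset.sum_empty]
    norm_num
    rw [gbc_neg_one]
  | @insert j s hj ih =>
    rw [G_insert m n hj]
    obtain ⟨e, he⟩ : ∃ e, m j = e + 1 := ⟨m j - 1, by have := h1 j (Finset.mem_insert_self j s); omega⟩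
    rw [he, Finset.sum_range_succ]
    have hsum : ((∑ i ∈ insert j s, m i : ℕ) : ℤ) = (∑ i ∈ s, m i : ℕ) + (e + 1) := by
      rw [Finset.sum_insert hj, he]; push_cast; ring
    have hlast : ((((∑ i ∈ insert j s, m i : ℕ) : ℤ) - 1 : ℤ) : ℚ) - 1 - (e : ℚ)
        = ((((∑ i ∈ s, m i : ℕ) : ℤ) - 1 : ℤ) : ℚ) := by
      rw [hsum]; push_cast; ring
    rw [hlast]
    have hrest : 0 ≤ ∑ a ∈ Finset.range e,
        G m n s (((((∑ i ∈ insert j s, m i : ℕ) : ℤ) - 1 : ℤ) : ℚ) - 1 - a) := by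
      apply Finset.sum_nonneg
      intro a ha
      have ha' : (a:ℤ) < e := by exact_mod_cast Finset.mem_range.mp ha
      have : ((((∑ i ∈ insert j s, m i : ℕ) : ℤ) - 1 : ℤ) : ℚ) - 1 - a
          = (((((∑ i ∈ insert j s, m i : ℕ) : ℤ) - 2 - a : ℤ)) : ℚ) := by push_cast; ring
      rw [this]
      apply G_nonneg
      omega
    have := ih (fun i hi => h1 i (Finset.mem_insert_of_mem hi))
    linarith

-- I3 : top two terms bound
lemma G_top (m : ι → ℕ) (n : ℕ) (s : Finset ι) (h2 : ∀ i ∈ s, 2 ≤ m i) :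
    ∀ x : ℤ, ((∑ i ∈ s, m i : ℕ) : ℤ) ≤ x →
    gbc (((x - s.card : ℤ)) : ℚ) n + (s.card : ℚ) * gbc (((x - s.card - 1 : ℤ)) : ℚ) n
      ≤ G m n s (x : ℚ) := by
  induction s using Finset.induction_on with
  | empty =>
    intro x hx
    rw [G_empty]
    simp
  | @insert j s hj ih =>
    intro x hx
    have h2' : ∀ i ∈ s, 2 ≤ m i := fun i hi => h2 i (Finset.mem_insert_of_mem hi)
    have hmj : 2 ≤ m j := h2 j (Finset.mem_insert_self j s)
    have hcard : (insert j s).card = s.card + 1 := Finset.card_insert_of_notMem hj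
    have hsum : ((∑ i ∈ insert j s, m i : ℕ) : ℤ) = (∑ i ∈ s, m i : ℕ) + m j := by
      rw [Finset.sum_insert hj]; push_cast; ring
    have hDs : 2 * (s.card : ℤ) ≤ ((∑ i ∈ s, m i : ℕ) : ℤ) := by
      have h' : ∑ i ∈ s, 2 ≤ ∑ i ∈ s, m i := Finset.sum_le_sum h2'
      simp only [Finset.sum_const, smul_eq_mul] at h'
      have h'' : 2 * s.card ≤ ∑ i ∈ s, m i := by omega
      exact_mod_cast h''
    rw [G_insert m n hj]
    obtain ⟨e, he⟩ : ∃ e, m j = e + 2 := ⟨m j - 2, by omega⟩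
    have hx' : ((∑ i ∈ s, m i : ℕ) : ℤ) + e + 2 ≤ x := by rw [hsum, he] at hx; omega
    rw [he, show e + 2 = (e+1)+1 from rfl, Finset.sum_range_succ', Finset.sum_range_succ']
    have hA : (0:ℚ) ≤ ∑ i ∈ Finset.range e, G m n s ((x:ℚ) - 1 - ((i+1+1 : ℕ):ℚ)) := by
      apply Finset.sum_nonneg
      intro i hi
      have hi' : (i:ℤ) < e := by exact_mod_cast Finset.mem_range.mp hi
      have : (x:ℚ) - 1 - ((i+1+1 : ℕ):ℚ) = (((x - 3 - i : ℤ)) : ℚ) := by push_cast; ring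
      rw [this]
      exact G_nonneg m n s _ (by omega)
    have hB : gbc (((x - 2 - s.card : ℤ)) : ℚ) n + (s.card : ℚ) * gbc (((x - 2 - s.card - 1 : ℤ)) : ℚ) n
        ≤ G m n s ((x:ℚ) - 1 - ((0+1 : ℕ):ℚ)) := by
      have harg : (x:ℚ) - 1 - ((0+1 : ℕ):ℚ) = (((x - 2 : ℤ)) : ℚ) := by push_cast; ring
      rw [harg]
      have := ih h2' (x - 2) (by omega)
      convert this using 4 <;> ring
    have hC : gbc (((x - 1 - s.card : ℤ)) : ℚ) n + (s.card : ℚ) * gbc (((x - 1 - s.card - 1 : ℤ)) : ℚ) n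
        ≤ G m n s ((x:ℚ) - 1 - ((0 : ℕ):ℚ)) := by
      have harg : (x:ℚ) - 1 - ((0 : ℕ):ℚ) = (((x - 1 : ℤ)) : ℚ) := by push_cast; ring
      rw [harg]
      have := ih h2' (x - 1) (by omega)
      convert this using 4 <;> ring
    have hExtra : (0:ℚ) ≤ (s.card : ℚ) * gbc (((x - 2 - s.card - 1 : ℤ)) : ℚ) n := by
      rcases Nat.eq_zero_or_pos s.card with hc0 | hc0
      · simp [hc0]
      · apply mul_nonneg (by positivity)
        apply gbc_int_nonneg
        omega
    have heq1 : ((x - 1 - (s.card:ℤ) - 1 : ℤ)) = ((x - 2 - s.card : ℤ)) := by ring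
    have heq2 : ((x - (↑(insert j s).card) : ℤ) : ℚ) = ((x - 1 - s.card : ℤ) : ℚ) := by
      rw [hcard]; push_cast; ring
    have heq3 : ((x - (↑(insert j s).card) - 1 : ℤ) : ℚ) = ((x - 2 - s.card : ℤ) : ℚ) := by
      rw [hcard]; push_cast; ring
    rw [heq2, heq3, hcard]
    rw [heq1] at hC
    push_cast at hA hB hC hExtra ⊢
    linarith

-- I2' : bottom plus top bound, for insert
lemma G_bottom_top (m : ι → ℕ) (n : ℕ) (s : Finset ι) (hs : s.Nonempty)
    (h2 : ∀ i ∈ s, 2 ≤ m i) :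
    (-1:ℚ)^n + gbc (((((∑ i ∈ s, m i : ℕ) : ℤ) - 1 - s.card : ℤ)) : ℚ) n
      ≤ G m n s ((((∑ i ∈ s, m i : ℕ) : ℤ) - 1 : ℤ) : ℚ) := by
  obtain ⟨j, s, hj, rfl⟩ : ∃ j t, j ∉ t ∧ insert j t = s := by
    obtain ⟨j, hjs⟩ := hs
    exact ⟨j, s.erase j, Finset.notMem_erase j s, Finset.insert_erase hjs⟩
  have h2' : ∀ i ∈ s, 2 ≤ m i := fun i hi => h2 i (Finset.mem_insert_of_mem hi)
  have hmj : 2 ≤ m j := h2 j (Finset.mem_insert_self j s)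
  have hcard : (insert j s).card = s.card + 1 := Finset.card_insert_of_notMem hj
  set S : ℤ := ((∑ i ∈ s, m i : ℕ) : ℤ) with hS
  have hsum : ((∑ i ∈ insert j s, m i : ℕ) : ℤ) = S + m j := by
    rw [hS, Finset.sum_insert hj]; push_cast; ring
  have hDs : 2 * (s.card : ℤ) ≤ S := by
    have h' : ∑ i ∈ s, 2 ≤ ∑ i ∈ s, m i := Finset.sum_le_sum h2'
    simp only [Finset.sum_const, smul_eq_mul] at h'
    have h'' : 2 * s.card ≤ ∑ i ∈ s, m i := by omega
    rw [hS]; exact_mod_cast h''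
  rw [G_insert m n hj]
  obtain ⟨e, he⟩ : ∃ e, m j = e + 2 := ⟨m j - 2, by omega⟩
  set X : ℤ := ((∑ i ∈ insert j s, m i : ℕ) : ℤ) - 1 with hX
  have hXe : X = S + e + 1 := by rw [hX, hsum, he]; push_cast; ring
  rw [he, show e + 2 = (e+1)+1 from rfl, Finset.sum_range_succ, Finset.sum_range_succ']
  -- pieces: middle (i+1 for i < e), last (a = e+1), first (a = 0)
  have hA : (0:ℚ) ≤ ∑ i ∈ Finset.range e, G m n s ((X:ℚ) - 1 - ((i+1 : ℕ):ℚ)) := by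
    apply Finset.sum_nonneg
    intro i hi
    have hi' : (i:ℤ) < e := by exact_mod_cast Finset.mem_range.mp hi
    have : (X:ℚ) - 1 - ((i+1 : ℕ):ℚ) = (((X - 2 - i : ℤ)) : ℚ) := by push_cast; ring
    rw [this]
    exact G_nonneg m n s _ (by omega)
  have hlast : (-1:ℚ)^n ≤ G m n s ((X:ℚ) - 1 - ((e+1 : ℕ):ℚ)) := by
    have : (X:ℚ) - 1 - ((e+1 : ℕ):ℚ) = (((S - 1 : ℤ)) : ℚ) := by rw [hXe]; push_cast; ring
    rw [this]
    exact G_bottom m n s (fun i hi => by have := h2' i hi; omega)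
  have hfirst : gbc (((X - (insert j s).card : ℤ)) : ℚ) n
      ≤ G m n s ((X:ℚ) - 1 - ((0 : ℕ):ℚ)) := by
    have harg : (X:ℚ) - 1 - ((0 : ℕ):ℚ) = (((X - 1 : ℤ)) : ℚ) := by push_cast; ring
    rw [harg]
    have hx1 : S ≤ X - 1 := by omega
    have h := G_top m n s h2' (X - 1) hx1
    have hextra : (0:ℚ) ≤ (s.card : ℚ) * gbc (((X - 1 - s.card - 1 : ℤ)) : ℚ) n := by
      rcases Nat.eq_zero_or_pos s.card with hc0 | hc0
      · simp [hc0]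
      · apply mul_nonneg (by positivity)
        apply gbc_int_nonneg
        omega
    have heq : ((X - (insert j s).card : ℤ)) = ((X - 1 - s.card : ℤ)) := by
      rw [hcard]; push_cast; ring
    rw [heq]
    linarith
  have hgoal : ((((∑ i ∈ insert j s, m i : ℕ) : ℤ) - 1 : ℤ) : ℚ) = (X : ℚ) := by rw [hX]
  have hgoal2 : ((((∑ i ∈ insert j s, m i : ℕ) : ℤ) - 1 - ((insert j s).card : ℤ) : ℤ) : ℚ)
      = ((X - (insert j s).card : ℤ) : ℚ) := by rw [hX]
  rw [hgoal2] at *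
  linarith

-- n = 0 : product lower bound
lemma G_prod (m : ι → ℕ) (s : Finset ι) :
    ∀ x : ℤ, ((∑ i ∈ s, m i : ℕ) : ℤ) - 1 ≤ x → (∏ i ∈ s, (m i : ℚ)) ≤ G m 0 s (x : ℚ) := by
  induction s using Finset.induction_on with
  | empty =>
    intro x hx
    rw [G_empty, gbc_zero, Finset.prod_empty]
  | @insert j s hj ih =>
    intro x hx
    rw [G_insert m 0 hj, Finset.prod_insert hj]
    have hsum : ((∑ i ∈ insert j s, m i : ℕ) : ℤ) = (∑ i ∈ s, m i : ℕ) + m j := by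
      rw [Finset.sum_insert hj]; push_cast; ring
    have key : ∀ a ∈ Finset.range (m j), (∏ i ∈ s, (m i : ℚ)) ≤ G m 0 s ((x:ℚ) - 1 - a) := by
      intro a ha
      have ha' : (a:ℤ) < m j := by exact_mod_cast Finset.mem_range.mp ha
      have : (x:ℚ) - 1 - a = (((x - 1 - a : ℤ)) : ℚ) := by push_cast; ring
      rw [this]
      exact ih (x - 1 - a) (by omega)
    calc (m j : ℚ) * ∏ i ∈ s, (m i : ℚ)
        = ∑ _a ∈ Finset.range (m j), ∏ i ∈ s, (m i : ℚ) := by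
          rw [Finset.sum_const, Finset.card_range, nsmul_eq_mul]
      _ ≤ ∑ a ∈ Finset.range (m j), G m 0 s ((x:ℚ) - 1 - a) := Finset.sum_le_sum key

-- choose facts
lemma gbc_ge_one (a n : ℕ) (h : n ≤ a) : (1:ℚ) ≤ gbc (a:ℚ) n := by
  rw [gbc_natCast]
  exact_mod_cast Nat.succ_le_of_lt (Nat.choose_pos h)

lemma gbc_ge (a n : ℕ) (h : n + 1 ≤ a) : ((n:ℚ) + 1) ≤ gbc (a:ℚ) n := by
  rw [gbc_natCast]
  have h1 : (n+1).choose n ≤ a.choose n := Nat.choose_le_choose n h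
  have h2 : (n+1).choose n = n + 1 := Nat.choose_succ_self_right n
  exact_mod_cast le_trans (le_of_eq h2.symm) h1

-- main inequality
lemma main_ineq (m : ι → ℕ) (s : Finset ι) (hs : s.Nonempty)
    (h2 : ∀ i ∈ s, 2 ≤ m i) (n k : ℕ) (hk : 1 ≤ k)
    (hD : ∑ i ∈ s, m i = n + s.card + 1 + k) :
    (n:ℚ) + s.card ≤ G m n s ((((∑ i ∈ s, m i : ℕ) : ℤ) - 1 : ℤ) : ℚ) := by
  rcases Nat.eq_zero_or_pos n with hn0 | hn1
  · subst hn0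
    have h1 : (∏ i ∈ s, (m i : ℚ)) ≤ G m 0 s ((((∑ i ∈ s, m i : ℕ) : ℤ) - 1 : ℤ) : ℚ) :=
      G_prod m s _ (by omega)
    have h2' : (2:ℚ)^s.card ≤ ∏ i ∈ s, (m i : ℚ) := by
      rw [← Finset.prod_const]
      apply Finset.prod_le_prod (fun i _ => by positivity)
      intro i hi
      exact_mod_cast h2 i hi
    have h3 : (s.card : ℚ) + 1 ≤ (2:ℚ)^s.card := by
      have hh : s.card + 1 ≤ 2^s.card := Nat.lt_two_pow_self (n := s.card)
      exact_mod_cast hh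
    simp only [Nat.cast_zero, zero_add]
    linarith
  · -- n ≥ 1
    obtain ⟨j, t, hj, rfl⟩ : ∃ j t, j ∉ t ∧ insert j t = s := by
      obtain ⟨j, hjs⟩ := hs
      exact ⟨j, s.erase j, Finset.notMem_erase j s, Finset.insert_erase hjs⟩
    have h2' : ∀ i ∈ t, 2 ≤ m i := fun i hi => h2 i (Finset.mem_insert_of_mem hi)
    have hmj : 2 ≤ m j := h2 j (Finset.mem_insert_self j t)
    have hcard : (insert j t).card = t.card + 1 := Finset.card_insert_of_notMem hj
    set c : ℕ := t.card with hc
    set S : ℤ := ((∑ i ∈ t, m i : ℕ) : ℤ) with hS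
    have hsum : ((∑ i ∈ insert j t, m i : ℕ) : ℤ) = S + m j := by
      rw [hS, Finset.sum_insert hj]; push_cast; ring
    have hDk : S + (m j : ℤ) = n + c + 1 + 1 + k := by
      rw [← hsum]; rw [hcard] at hD; push_cast [hD]; ring
    set X : ℤ := ((∑ i ∈ insert j t, m i : ℕ) : ℤ) - 1 with hX
    rw [G_insert m n hj]
    rcases eq_or_lt_of_le hmj with hmj2 | hmj3
    · -- m j = 2 case
      have ht : t.Nonempty := by
        rcases Finset.eq_empty_or_nonempty t with h | h
        · exfalso
          have hS0 : S = 0 := by rw [hS, h]; simp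
          have hc0 : c = 0 := by rw [hc, h]; simp
          omega
        · exact h
      rw [← hmj2, Finset.sum_range_succ, Finset.sum_range_succ, Finset.sum_range_zero, zero_add]
      -- terms a = 0 and a = 1
      have hXS : X = S + 1 := by rw [hX, hsum, ← hmj2]; ring
      have h0 : gbc (((X - 1 - c : ℤ)) : ℚ) n + (c : ℚ) * gbc (((X - 1 - c - 1 : ℤ)) : ℚ) n
          ≤ G m n t ((X:ℚ) - 1 - ((0:ℕ):ℚ)) := by
        have harg : (X:ℚ) - 1 - ((0:ℕ):ℚ) = (((X - 1 : ℤ)) : ℚ) := by push_cast; ring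
        rw [harg]
        have := G_top m n t h2' (X - 1) (by omega)
        convert this using 4 <;> ring
      have h1 : (-1:ℚ)^n + gbc (((S - 1 - c : ℤ)) : ℚ) n ≤ G m n t ((X:ℚ) - 1 - ((1:ℕ):ℚ)) := by
        have harg : (X:ℚ) - 1 - ((1:ℕ):ℚ) = (((S - 1 : ℤ)) : ℚ) := by rw [hXS]; push_cast; ring
        rw [harg]
        exact G_bottom_top m n t ht h2'
      -- numeric bounds
      have e1 : ((n:ℚ) + 1) ≤ gbc (((X - 1 - c : ℤ)) : ℚ) n := by
        have : X - 1 - c = ((n + k : ℕ) : ℤ) := by push_cast; omega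
        rw [this, Int.cast_natCast]
        exact gbc_ge _ n (by omega)
      have e2 : (c:ℚ) * 1 ≤ (c : ℚ) * gbc (((X - 1 - c - 1 : ℤ)) : ℚ) n := by
        apply mul_le_mul_of_nonneg_left _ (by positivity)
        have : X - 1 - c - 1 = ((n + k - 1 : ℕ) : ℤ) := by push_cast; omega
        rw [this, Int.cast_natCast]
        exact gbc_ge_one _ n (by omega)
      have e3 : (1:ℚ) ≤ gbc (((S - 1 - c : ℤ)) : ℚ) n := by
        have : S - 1 - c = ((n + k - 1 : ℕ) : ℤ) := by push_cast; omega
        rw [this, Int.cast_natCast]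
        exact gbc_ge_one _ n (by omega)
      have e4 : (-1:ℚ) ≤ (-1:ℚ)^n := by
        rcases Nat.even_or_odd n with he | ho
        · rw [he.neg_one_pow]; norm_num
        · rw [ho.neg_one_pow]
      rw [hcard]
      push_cast
      push_cast at h0 h1 e1 e2 e3
      linarith
    · -- m j ≥ 3 case
      obtain ⟨e, hee⟩ : ∃ e, m j = e + 3 := ⟨m j - 3, by omega⟩
      have hXS : X = S + e + 2 := by rw [hX, hsum, hee]; push_cast; ring
      rw [hee, show e + 3 = ((e+1)+1)+1 from rfl, Finset.sum_range_succ,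
        Finset.sum_range_succ', Finset.sum_range_succ']
      -- pieces: middle ∑_{i<e} f(i+2), f 1, f 0, last f(e+2)
      have hmid : (0:ℚ) ≤ ∑ i ∈ Finset.range e, G m n t ((X:ℚ) - 1 - ((i+1+1 : ℕ):ℚ)) := by
        apply Finset.sum_nonneg
        intro i hi
        have hi' : (i:ℤ) < e := by exact_mod_cast Finset.mem_range.mp hi
        have : (X:ℚ) - 1 - ((i+1+1 : ℕ):ℚ) = (((X - 3 - i : ℤ)) : ℚ) := by push_cast; ring
        rw [this]
        exact G_nonneg m n t _ (by omega)
      have hlast : (-1:ℚ)^n ≤ G m n t ((X:ℚ) - 1 - ((e+2 : ℕ):ℚ)) := by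
        have harg : (X:ℚ) - 1 - ((e+2 : ℕ):ℚ) = (((S - 1 : ℤ)) : ℚ) := by
          rw [hXS]; push_cast; ring
        rw [harg]
        exact G_bottom m n t (fun i hi => by have := h2' i hi; omega)
      have h0 : gbc (((X - 1 - c : ℤ)) : ℚ) n + (c : ℚ) * gbc (((X - 1 - c - 1 : ℤ)) : ℚ) n
          ≤ G m n t ((X:ℚ) - 1 - ((0:ℕ):ℚ)) := by
        have harg : (X:ℚ) - 1 - ((0:ℕ):ℚ) = (((X - 1 : ℤ)) : ℚ) := by push_cast; ring
        rw [harg]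
        have := G_top m n t h2' (X - 1) (by omega)
        convert this using 4 <;> ring
      have h1 : gbc (((X - 2 - c : ℤ)) : ℚ) n + (c : ℚ) * gbc (((X - 2 - c - 1 : ℤ)) : ℚ) n
          ≤ G m n t ((X:ℚ) - 1 - ((0+1:ℕ):ℚ)) := by
        have harg : (X:ℚ) - 1 - ((0+1:ℕ):ℚ) = (((X - 2 : ℤ)) : ℚ) := by push_cast; ring
        rw [harg]
        have := G_top m n t h2' (X - 2) (by omega)
        convert this using 4 <;> ring
      -- numeric bounds
      have e1 : ((n:ℚ) + 1) ≤ gbc (((X - 1 - c : ℤ)) : ℚ) n := by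
        have : X - 1 - c = ((n + k : ℕ) : ℤ) := by push_cast; omega
        rw [this, Int.cast_natCast]
        exact gbc_ge _ n (by omega)
      have e2 : (1:ℚ) ≤ gbc (((X - 1 - c - 1 : ℤ)) : ℚ) n := by
        have : X - 1 - c - 1 = ((n + k - 1 : ℕ) : ℤ) := by push_cast; omega
        rw [this, Int.cast_natCast]
        exact gbc_ge_one _ n (by omega)
      have e2' : (1:ℚ) ≤ gbc (((X - 2 - c : ℤ)) : ℚ) n := by
        have : X - 2 - c = ((n + k - 1 : ℕ) : ℤ) := by push_cast; omega
        rw [this, Int.cast_natCast]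
        exact gbc_ge_one _ n (by omega)
      have e3 : (0:ℚ) ≤ (c : ℚ) * gbc (((X - 2 - c - 1 : ℤ)) : ℚ) n := by
        apply mul_nonneg (by positivity)
        apply gbc_int_nonneg
        omega
      have e4 : (-1:ℚ) ≤ (-1:ℚ)^n := by
        rcases Nat.even_or_odd n with he | ho
        · rw [he.neg_one_pow]; norm_num
        · rw [ho.neg_one_pow]
      have ecmul : (0:ℚ) ≤ (c:ℚ) * (gbc (((X - 1 - c - 1 : ℤ)) : ℚ) n - 1) := by
        apply mul_nonneg (by positivity)
        linarith
      rw [hcard]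
      push_cast
      push_cast at hmid hlast h0 h1 e1 e2 e2' e3 ecmul
      nlinarith [e1, e2, e2', e3, e4, hmid, hlast, h0, h1, ecmul]

end Aux

/-- Todd genus of the complete intersection `X_n(d₁,…,d_r)` via the combinatorial formula. -/
def Td (n r : ℕ) (d : Fin r → ℤ) : ℚ :=
  ∑ S ∈ (Finset.univ : Finset (Fin r)).powerset,
    (-1) ^ (n + r + S.card) * gbc (-1 + ∑ i ∈ S, (d i : ℚ)) (n + r)

theorem todd_neg_c1 (n r : ℕ) (hr : 1 ≤ r) (d : Fin r → ℤ) (hd : ∀ i, 1 < d i)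
    (hc : (n : ℤ) + r + 1 - ∑ i, d i < 0) :
    (n : ℚ) + r ≤ (-1) ^ n * Td n r d := by
  set m : Fin r → ℕ := fun i => (d i).toNat with hm
  have hdm : ∀ i, (d i : ℚ) = (m i : ℚ) := by
    intro i
    rw [hm]
    have : ((d i).toNat : ℤ) = d i := Int.toNat_of_nonneg (by have := hd i; omega)
    exact_mod_cast this.symm
  have h2 : ∀ i, 2 ≤ m i := by
    intro i
    have h := hd i
    have h' : 2 ≤ (d i).toNat := by omega
    simpa [hm] using h'
  set D : ℕ := ∑ i, m i with hD
  have hDd : ((D:ℕ):ℤ) = ∑ i, d i := by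
    rw [hD]
    push_cast
    apply Finset.sum_congr rfl
    intro i _
    exact Int.toNat_of_nonneg (by have := hd i; omega)
  have hDge : n + r + 2 ≤ D := by omega
  -- identity: (-1)^n * Td = G m n univ (D - 1)
  have hiden : (-1:ℚ)^n * Td n r d = G m n Finset.univ ((((D:ℕ):ℤ) - 1 : ℤ) : ℚ) := by
    rw [Td, G, Finset.mul_sum, Finset.powerset_univ]
    refine Fintype.sum_bijective compl (Function.Involutive.bijective compl_involutive) _ _ ?_
    intro S
    have hcompl : S.card + Sᶜ.card = r := by
      rw [Finset.card_add_card_compl]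
      simp
    have hsign : (-1:ℚ)^n * (-1:ℚ)^(n + r + S.card) = (-1:ℚ)^(Sᶜ.card) := by
      rw [← pow_add]
      have hexp : n + (n + r + S.card) = 2*(n + S.card) + Sᶜ.card := by omega
      rw [hexp, pow_add, pow_mul]
      norm_num
    have harg : (-1 : ℚ) + ∑ i ∈ S, (d i : ℚ)
        = ((((D:ℕ):ℤ) - 1 : ℤ) : ℚ) - ∑ i ∈ Sᶜ, (m i : ℚ) := by
      have h1 : ∑ i ∈ S, (m i : ℚ) + ∑ i ∈ Sᶜ, (m i : ℚ) = ((D:ℕ) : ℚ) := by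
        rw [Finset.sum_add_sum_compl, hD]
        push_cast
        rfl
      have h2 : ∑ i ∈ S, (d i : ℚ) = ∑ i ∈ S, (m i : ℚ) :=
        Finset.sum_congr rfl (fun i _ => hdm i)
      push_cast
      linarith
    have hcu : (Finset.univ : Finset (Fin r)).card = r := by simp
    rw [← mul_assoc, hsign, harg, hcu]
  rw [hiden]
  have key := main_ineq m Finset.univ (Finset.univ_nonempty_iff.mpr ⟨⟨0, hr⟩⟩)
    (fun i _ => h2 i) n (D - (n + r + 1)) (by omega) (by simp; omega)
  have hcu : (Finset.univ : Finset (Fin r)).card = r := by simp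
  rw [hcu] at key
  have hDD : ((∑ i, m i : ℕ) : ℤ) = ((D:ℕ):ℤ) := by rw [hD]
  rw [hDD] at key
  exact key
end

section
/- Define χ(n; d_1,…,d_r; t) := Σ_{j=0}^{r} (-1)^{n+r+j} Σ_{1 ≤ k_1 < ⋯ < k_j ≤ r} C(t·c_1 - 1 + d_{k_1} + ⋯ + d_{k_j}, n+r), where c_1 = n + r + 1 - Σ d_i. If c_1 < 0, all d_i > 1, t ∈ ℚ with 1/2 ≤ t ≤ 1 and t·c_1 ∈ ℤ, then χ(n; d; t) ≥ C(n + 1 - t·c_1, n+1) + (-1)^n · C(n + 1 - (1-t)·c_1, n+1). -/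
open Finset

/-- Euler–Poincaré characteristic `χ(X_n(d), K^t)` of the complete intersection,
via the combinatorial formula, where `c₁ = n + r + 1 - ∑ dᵢ`. -/
def chiCI (n r : ℕ) (d : Fin r → ℤ) (t : ℚ) : ℚ :=
  ∑ S ∈ (Finset.univ : Finset (Fin r)).powerset,
    (-1) ^ (n + r + S.card) *
      gbc (t * ((n : ℚ) + r + 1 - ∑ i, (d i : ℚ)) - 1 + ∑ i ∈ S, (d i : ℚ)) (n + r)

lemma gbc_succ (a : ℚ) (k : ℕ) : gbc (a+1) (k+1) = gbc a (k+1) + gbc a k := by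
  unfold gbc
  have h1 : ∏ i ∈ range (k+1), (a + 1 - i) = (∏ i ∈ range k, (a - i)) * (a+1) := by
    rw [Finset.prod_range_succ']
    congr 1
    · apply Finset.prod_congr rfl; intro i _; push_cast; ring
    · simp
  have h2 : ∏ i ∈ range (k+1), (a - i) = (∏ i ∈ range k, (a - i)) * (a - k) :=
    Finset.prod_range_succ _ _
  rw [h1, h2, Nat.factorial_succ]
  have hk : ((k+1) * Nat.factorial k : ℚ) ≠ 0 := by positivity
  have hk' : (Nat.factorial k : ℚ) ≠ 0 := by positivity
  push_cast
  field_simp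
  ring

lemma gbc_natCast_s13 (N k : ℕ) : gbc (N : ℚ) k = (N.choose k : ℚ) := by
  induction N generalizing k with
  | zero =>
    cases k with
    | zero => simp [gbc]
    | succ k' =>
      rw [gbc]
      simp only [Nat.cast_zero]
      rw [show (∏ i ∈ range (k'+1), ((0:ℚ) - i)) = 0 from
        Finset.prod_eq_zero (Finset.mem_range.2 (Nat.succ_pos k')) (by simp)]
      simp
  | succ N ih =>
    cases k with
    | zero => simp [gbc]
    | succ k' =>
      have : ((N:ℚ) + 1) = (N:ℚ) + 1 := rfl
      have h := gbc_succ (N : ℚ) k'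
      push_cast
      rw [show ((N:ℚ) + 1) = (N:ℚ) + 1 from rfl, h, ih, ih, Nat.choose_succ_succ]
      push_cast; ring

lemma gbc_reflect (a : ℚ) (k : ℕ) : gbc a k = (-1)^k * gbc ((k:ℚ) - 1 - a) k := by
  unfold gbc
  have h : ∏ i ∈ range k, ((k:ℚ) - 1 - a - i) = (-1)^k * ∏ i ∈ range k, (a - i) := by
    rw [← Finset.prod_range_reflect (fun i => (k:ℚ) - 1 - a - i) k]
    have : ∀ j ∈ range k, (k:ℚ) - 1 - a - (k - 1 - j : ℕ) = -(a - j) := by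
      intro j hj
      rw [Finset.mem_range] at hj
      have : ((k - 1 - j : ℕ) : ℚ) = (k:ℚ) - 1 - j := by
        have : j ≤ k - 1 := by omega
        push_cast [Nat.cast_sub this, Nat.cast_sub (by omega : 1 ≤ k)]
        ring
      rw [this]; ring
    rw [Finset.prod_congr rfl this]
    have : ∀ j ∈ range k, -(a - (j:ℚ)) = (-1) * (a - j) := by intros; ring
    rw [Finset.prod_congr rfl this, Finset.prod_mul_distrib, Finset.prod_const]
    simp
  rw [h]
  have h2 : ((-1:ℚ))^k * (-1)^k = 1 := by
    rw [← pow_add]; exact Even.neg_one_pow ⟨k, by ring⟩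
  rw [mul_div_assoc, ← mul_assoc, h2, one_mul]

lemma gbc_telescope_s13 (x : ℚ) (k : ℕ) : ∀ d : ℕ,
    ∑ j ∈ range d, gbc (x + j) k = gbc (x + d) (k+1) - gbc x (k+1) := by
  intro d
  induction d with
  | zero => simp
  | succ d ih =>
    rw [Finset.sum_range_succ, ih]
    have h := gbc_succ (x + d) k
    have : x + (d:ℚ) + 1 = x + (d + 1 : ℕ) := by push_cast; ring
    rw [this] at h
    rw [h]; ring

lemma gbc_intCast (z : ℤ) (k : ℕ) (hz : 0 ≤ z) : gbc (z:ℚ) k = (z.toNat.choose k : ℚ) := by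
  rw [← gbc_natCast_s13]
  congr 1
  exact_mod_cast (Int.toNat_of_nonneg hz).symm

lemma gbc_intCast_neg (z : ℤ) (k : ℕ) (hz : z < 0) :
    gbc (z:ℚ) k = (-1)^k * (((k - 1 - z).toNat.choose k : ℕ) : ℚ) := by
  rw [gbc_reflect ((z:ℤ):ℚ) k]
  congr 1
  rw [show ((k:ℚ) - 1 - (z:ℚ)) = (((k:ℤ) - 1 - z : ℤ) : ℚ) by push_cast; ring]
  exact gbc_intCast _ _ (by omega)

lemma neg_one_pow_bound (n : ℕ) (x y : ℚ) (hx : 0 ≤ x) (hxy : x ≤ y) :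
    0 ≤ y + (-1)^n * x := by
  rcases Nat.even_or_odd n with h | h
  · rw [h.neg_one_pow]; linarith
  · rw [h.neg_one_pow]; linarith

lemma sum_piFinset_succ {r : ℕ} (T : Fin (r+1) → Finset ℕ) (F : (Fin (r+1) → ℕ) → ℚ) :
    ∑ j ∈ Fintype.piFinset T, F j
      = ∑ a ∈ T 0, ∑ j ∈ Fintype.piFinset (fun i : Fin r => T i.succ), F (Fin.cons a j) := by
  rw [← Finset.sum_product']
  apply Finset.sum_nbij' (i := fun (j : Fin (r+1) → ℕ) => ((j 0, Fin.tail j) :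
      ℕ × (Fin r → ℕ))) (j := fun p => Fin.cons p.1 p.2)
  · intro j hj
    rw [Fintype.mem_piFinset] at hj
    rw [Finset.mem_product]
    exact ⟨hj 0, Fintype.mem_piFinset.2 fun i => hj i.succ⟩
  · intro p hp
    rw [Finset.mem_product] at hp
    rw [Fintype.mem_piFinset]
    intro i
    refine Fin.cases ?_ ?_ i
    · simpa using hp.1
    · intro i'; simpa using Fintype.mem_piFinset.1 hp.2 i'
  · intro j _; exact Fin.cons_self_tail j
  · intro p _; simp [Fin.tail_cons]
  · intro j _; rw [Fin.cons_self_tail]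

lemma key_identity : ∀ (r : ℕ) (D : Fin r → ℕ) (x : ℚ) (k : ℕ),
    ∑ ε ∈ Fintype.piFinset (fun _ : Fin r => Finset.range 2),
        (-1 : ℚ)^(r + ∑ i, ε i) * gbc (x + ((∑ i, ε i * D i : ℕ) : ℚ)) (k + r)
      = ∑ j ∈ Fintype.piFinset (fun i : Fin r => Finset.range (D i)),
          gbc (x + ((∑ i, j i : ℕ) : ℚ)) k := by
  intro r
  induction r with
  | zero =>
    intro D x k
    haveI : IsEmpty (Fin 0) := by infer_instance
    rw [Fintype.piFinset_of_isEmpty, Fintype.piFinset_of_isEmpty]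
    rw [Fintype.sum_subsingleton _ (fun i : Fin 0 => (0:ℕ)),
      Fintype.sum_subsingleton _ (fun i : Fin 0 => (0:ℕ))]
    simp
  | succ r ih =>
    intro D x k
    rw [sum_piFinset_succ, sum_piFinset_succ]
    have hL : ∀ a ∈ range 2, ∀ ε ∈ Fintype.piFinset (fun _ : Fin r => range 2),
        (-1:ℚ)^((r+1) + ∑ i, (Fin.cons a ε : Fin (r+1) → ℕ) i) *
          gbc (x + ((∑ i, (Fin.cons a ε : Fin (r+1) → ℕ) i * D i : ℕ):ℚ)) (k + (r+1))
        = (-1:ℚ)^((r+1) + (a + ∑ i, ε i)) *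
          gbc ((x + (a * D 0 : ℕ)) + ((∑ i, ε i * D i.succ : ℕ):ℚ)) ((k+1) + r) := by
      intro a _ ε _
      rw [Fin.sum_univ_succ (fun i => (Fin.cons a ε : Fin (r+1) → ℕ) i),
        Fin.sum_univ_succ (fun i => (Fin.cons a ε : Fin (r+1) → ℕ) i * D i)]
      simp only [Fin.cons_zero, Fin.cons_succ]
      congr 2
      · push_cast; ring
      · omega
    rw [Finset.sum_congr rfl (fun a ha => Finset.sum_congr rfl (hL a ha))]
    rw [Finset.sum_range_succ, Finset.sum_range_one]
    have e0 : ∀ ε : Fin r → ℕ, (-1:ℚ)^((r+1) + (0 + ∑ i, ε i)) = -((-1:ℚ)^(r + ∑ i, ε i)) := by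
      intro ε; rw [show (r+1) + (0 + ∑ i, ε i) = (r + ∑ i, ε i) + 1 by omega, pow_succ]; ring
    have e1 : ∀ ε : Fin r → ℕ, (-1:ℚ)^((r+1) + (1 + ∑ i, ε i)) = (-1:ℚ)^(r + ∑ i, ε i) := by
      intro ε; rw [show (r+1) + (1 + ∑ i, ε i) = (r + ∑ i, ε i) + 2 by omega, pow_succ, pow_succ]
      ring
    calc
      (∑ ε ∈ Fintype.piFinset (fun _ : Fin r => range 2),
          (-1:ℚ)^((r+1) + (0 + ∑ i, ε i)) *
            gbc ((x + ((0 * D 0 : ℕ):ℚ)) + ((∑ i, ε i * D i.succ : ℕ):ℚ)) ((k+1) + r))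
        + ∑ ε ∈ Fintype.piFinset (fun _ : Fin r => range 2),
          (-1:ℚ)^((r+1) + (1 + ∑ i, ε i)) *
            gbc ((x + ((1 * D 0 : ℕ):ℚ)) + ((∑ i, ε i * D i.succ : ℕ):ℚ)) ((k+1) + r)
          = (∑ j ∈ Fintype.piFinset (fun i : Fin r => range (D i.succ)),
              gbc ((x + (D 0:ℕ)) + ((∑ i, j i : ℕ):ℚ)) (k+1))
            - ∑ j ∈ Fintype.piFinset (fun i : Fin r => range (D i.succ)),
              gbc (x + ((∑ i, j i : ℕ):ℚ)) (k+1) := by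
        have hA : ∑ ε ∈ Fintype.piFinset (fun _ : Fin r => range 2),
            (-1:ℚ)^((r+1) + (0 + ∑ i, ε i)) *
              gbc ((x + ((0 * D 0 : ℕ):ℚ)) + ((∑ i, ε i * D i.succ : ℕ):ℚ)) ((k+1) + r)
            = -∑ j ∈ Fintype.piFinset (fun i : Fin r => range (D i.succ)),
                gbc (x + ((∑ i, j i : ℕ):ℚ)) (k+1) := by
          rw [← ih (fun i => D i.succ) x (k+1), ← Finset.sum_neg_distrib]
          apply Finset.sum_congr rfl
          intro ε _
          rw [e0 ε]
          norm_num
        have hB : ∑ ε ∈ Fintype.piFinset (fun _ : Fin r => range 2),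
            (-1:ℚ)^((r+1) + (1 + ∑ i, ε i)) *
              gbc ((x + ((1 * D 0 : ℕ):ℚ)) + ((∑ i, ε i * D i.succ : ℕ):ℚ)) ((k+1) + r)
            = ∑ j ∈ Fintype.piFinset (fun i : Fin r => range (D i.succ)),
                gbc ((x + (D 0:ℕ)) + ((∑ i, j i : ℕ):ℚ)) (k+1) := by
          rw [← ih (fun i => D i.succ) (x + (D 0:ℕ)) (k+1)]
          apply Finset.sum_congr rfl
          intro ε _
          rw [e1 ε]
          norm_num
        rw [hA, hB]; ring
      _ = ∑ j ∈ Fintype.piFinset (fun i : Fin r => range (D i.succ)),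
            ∑ c ∈ range (D 0), gbc ((x + ((∑ i, j i : ℕ):ℚ)) + c) k := by
        rw [← Finset.sum_sub_distrib]
        apply Finset.sum_congr rfl
        intro j _
        rw [gbc_telescope_s13 (x + ((∑ i, j i : ℕ):ℚ)) k (D 0)]
        congr 2
        push_cast; ring
      _ = ∑ c ∈ range (D 0),
            ∑ j ∈ Fintype.piFinset (fun i : Fin r => range (D (Fin.succ i))),
              gbc (x + ((∑ i, (Fin.cons c j : Fin (r+1) → ℕ) i : ℕ):ℚ)) k := by
        rw [Finset.sum_comm]
        apply Finset.sum_congr rfl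
        intro c _
        apply Finset.sum_congr rfl
        intro j _
        rw [Fin.sum_univ_succ (fun i => (Fin.cons c j : Fin (r+1) → ℕ) i)]
        simp only [Fin.cons_zero, Fin.cons_succ]
        congr 1
        push_cast; ring

lemma powerset_eq_eps (r : ℕ) (D : Fin r → ℕ) (x : ℚ) (N : ℕ) :
    ∑ S ∈ (Finset.univ : Finset (Fin r)).powerset,
        (-1:ℚ)^(S.card) * gbc (x + ∑ i ∈ S, (D i : ℚ)) N
      = ∑ ε ∈ Fintype.piFinset (fun _ : Fin r => range 2),
          (-1:ℚ)^(∑ i, ε i) * gbc (x + ((∑ i, ε i * D i : ℕ):ℚ)) N := by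
  apply Finset.sum_nbij'
    (i := fun (S : Finset (Fin r)) => fun idx => if idx ∈ S then 1 else 0)
    (j := fun (ε : Fin r → ℕ) => Finset.univ.filter (fun idx => ε idx = 1))
  · intro S _
    rw [Fintype.mem_piFinset]
    intro idx
    by_cases h : idx ∈ S <;> simp [h]
  · intro ε _; simp
  · intro S _
    ext idx
    by_cases h : idx ∈ S <;> simp [h]
  · intro ε hε
    rw [Fintype.mem_piFinset] at hε
    funext idx
    have := hε idx
    rw [Finset.mem_range] at this
    by_cases h : ε idx = 1
    · simp [h]
    · have : ε idx = 0 := by omega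
      simp [this]
  · intro S _
    have hcard : S.card = ∑ i, (if i ∈ S then 1 else 0) := by
      rw [Finset.sum_ite_mem, Finset.univ_inter, Finset.card_eq_sum_ones]
    have hsum : ∑ i ∈ S, (D i : ℚ) = ((∑ i, (if i ∈ S then 1 else 0) * D i : ℕ):ℚ) := by
      have : ∑ i, (if i ∈ S then 1 else 0) * D i = ∑ i ∈ S, D i := by
        rw [Finset.sum_congr rfl (fun i _ => by
          by_cases h : i ∈ S <;> simp [h] :
          ∀ i ∈ univ, (if i ∈ S then 1 else 0) * D i = if i ∈ S then D i else 0)]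
        rw [Finset.sum_ite_mem, Finset.univ_inter]
      rw [this]; push_cast; rfl
    rw [← hcard, ← hsum]

def tup : (r : ℕ) → (e : Fin r → ℕ) → ℕ → (Fin r → ℕ)
  | 0, _, _ => fun i => i.elim0
  | r+1, e, J => Fin.cons (min J (e 0)) (tup r (fun i => e i.succ) (J - e 0))

lemma tup_le : ∀ (r : ℕ) (e : Fin r → ℕ) (J : ℕ) (i : Fin r), tup r e J i ≤ e i := by
  intro r
  induction r with
  | zero => intro e J i; exact i.elim0
  | succ r ih =>
    intro e J i
    refine Fin.cases ?_ ?_ i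
    · simp [tup]
    · intro i'; simp only [tup, Fin.cons_succ]; exact ih _ _ i'

lemma tup_sum : ∀ (r : ℕ) (e : Fin r → ℕ) (J : ℕ), J ≤ ∑ i, e i → ∑ i, tup r e J i = J := by
  intro r
  induction r with
  | zero =>
    intro e J h
    have : J = 0 := by simpa using h
    subst this; simp
  | succ r ih =>
    intro e J h
    rw [Fin.sum_univ_succ] at h ⊢
    simp only [tup, Fin.cons_zero, Fin.cons_succ]
    have hh : J - e 0 ≤ ∑ i : Fin r, e i.succ := by omega
    rw [ih (fun i => e i.succ) (J - e 0) hh]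
    omega



theorem chi_neg_c1_bound (n r : ℕ) (hr : 1 ≤ r) (d : Fin r → ℤ) (hd : ∀ i, 1 < d i)
    (hc : (n : ℤ) + r + 1 - ∑ i, d i < 0) (t : ℚ) (ht1 : 1 / 2 ≤ t) (ht2 : t ≤ 1)
    (hint : ∃ m : ℤ, t * ((n : ℚ) + r + 1 - ∑ i, (d i : ℚ)) = m) :
    gbc ((n : ℚ) + 1 - t * ((n : ℚ) + r + 1 - ∑ i, (d i : ℚ))) (n + 1) +
        (-1) ^ n * gbc ((n : ℚ) + 1 - (1 - t) * ((n : ℚ) + r + 1 - ∑ i, (d i : ℚ))) (n + 1) ≤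
      chiCI n r d t := by
  classical
  obtain ⟨m, hm⟩ := hint
  set c : ℤ := (n:ℤ) + r + 1 - ∑ i, d i with hc_def
  have hcQ : ((c:ℤ):ℚ) = (n : ℚ) + r + 1 - ∑ i, (d i : ℚ) := by
    rw [hc_def]; push_cast; ring
  have hc1 : c ≤ -1 := by omega
  have hcQ1 : ((c:ℤ):ℚ) ≤ -1 := by exact_mod_cast hc1
  have hmQ : (m:ℚ) = t * ((c:ℤ):ℚ) := by rw [hcQ, hm]
  -- basic integer facts
  have hm1 : m ≤ -1 := by
    have : (m:ℚ) ≤ -1/2 := by nlinarith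
    have : (m:ℚ) < 0 := by linarith
    have hmlt : m < 0 := by exact_mod_cast this
    omega
  have hcm : c ≤ m := by
    have : ((c:ℤ):ℚ) ≤ (m:ℚ) := by nlinarith
    exact_mod_cast this
  have h2m : 2*m ≤ c := by
    have : ((2*m : ℤ):ℚ) ≤ ((c:ℤ):ℚ) := by push_cast; nlinarith
    exact_mod_cast this
  set a : ℕ := (-m).toNat with ha_def
  set a' : ℕ := (m - c).toNat with ha'_def
  have ha : (a:ℤ) = -m := Int.toNat_of_nonneg (by omega)
  have ha' : (a':ℤ) = m - c := Int.toNat_of_nonneg (by omega)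
  have ha'a : a' ≤ a := by omega
  set D : Fin r → ℕ := fun i => (d i).toNat with hD_def
  have hDd : ∀ i, (D i : ℤ) = d i := fun i => Int.toNat_of_nonneg (by linarith [hd i])
  have hD2 : ∀ i, 2 ≤ D i := fun i => by have := hd i; have := hDd i; omega
  set e : Fin r → ℕ := fun i => D i - 1 with he_def
  set M : ℕ := ∑ i, e i with hM_def
  have hM : (M:ℤ) = n + 1 + a + a' := by
    have h2 : ∀ i : Fin r, ((e i : ℕ) : ℤ) = d i - 1 := by
      intro i; have h3 := hDd i; have h4 := hD2 i; simp only [he_def]; omega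
    have h1 : (M:ℤ) = ∑ i, (d i - 1) := by
      rw [hM_def]; push_cast; exact Finset.sum_congr rfl (fun i _ => h2 i)
    rw [h1, Finset.sum_sub_distrib, Finset.sum_const, Finset.card_univ, Fintype.card_fin,
      nsmul_eq_mul, mul_one]
    have hc2 : c = (n:ℤ) + r + 1 - ∑ i, d i := hc_def
    linarith [ha, ha']
  have hsgn : (-1:ℚ)^n * (-1)^n = 1 := by
    rw [← pow_add]; exact Even.neg_one_pow ⟨n, by ring⟩
  set f : ℕ → ℚ := fun K => (-1:ℚ)^n * gbc ((m:ℚ) - 1 + K) n with hf_def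
  set P : Finset (Fin r → ℕ) := Fintype.piFinset (fun i => Finset.range (D i)) with hP_def
  -- Step 1 : chi as a sum over tuples
  have hDQ : ∀ i, (d i : ℚ) = ((D i : ℕ) : ℚ) := by
    intro i; have h := hDd i; exact_mod_cast congrArg (fun z : ℤ => (z:ℚ)) h.symm
  have step1 : chiCI n r d t = ∑ j ∈ P, f (∑ i, j i) := by
    calc chiCI n r d t
        = ∑ S ∈ (univ : Finset (Fin r)).powerset,
            ((-1:ℚ)^n * (-1)^r) *
              ((-1)^(S.card) * gbc (((m:ℚ)-1) + ∑ i ∈ S, ((D i:ℕ):ℚ)) (n+r)) := by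
          unfold chiCI
          apply Finset.sum_congr rfl
          intro S _
          rw [hm, Finset.sum_congr rfl (fun i (_ : i ∈ S) => hDQ i), pow_add, pow_add]
          ring_nf
      _ = ((-1:ℚ)^n * (-1)^r) * ∑ S ∈ (univ : Finset (Fin r)).powerset,
            (-1:ℚ)^(S.card) * gbc (((m:ℚ)-1) + ∑ i ∈ S, ((D i:ℕ):ℚ)) (n+r) := by
          rw [Finset.mul_sum]
      _ = ((-1:ℚ)^n * (-1)^r) * ∑ ε ∈ Fintype.piFinset (fun _ : Fin r => range 2),
            (-1:ℚ)^(∑ i, ε i) * gbc (((m:ℚ)-1) + ((∑ i, ε i * D i : ℕ):ℚ)) (n+r) := by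
          rw [powerset_eq_eps r D ((m:ℚ)-1) (n+r)]
      _ = (-1:ℚ)^n * ∑ ε ∈ Fintype.piFinset (fun _ : Fin r => range 2),
            (-1:ℚ)^(r + ∑ i, ε i) * gbc (((m:ℚ)-1) + ((∑ i, ε i * D i : ℕ):ℚ)) (n+r) := by
          rw [Finset.mul_sum, Finset.mul_sum]
          apply Finset.sum_congr rfl
          intro ε _
          rw [pow_add]
          ring
      _ = (-1:ℚ)^n * ∑ j ∈ Fintype.piFinset (fun i : Fin r => range (D i)),
            gbc (((m:ℚ)-1) + ((∑ i, j i : ℕ):ℚ)) n := by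
          rw [key_identity r D ((m:ℚ)-1) n]
      _ = ∑ j ∈ P, f (∑ i, j i) := by
          rw [hP_def, Finset.mul_sum]
  -- pointwise facts
  have hf_low : ∀ K : ℕ, K ≤ a → f K = (((n + a - K).choose n : ℕ) : ℚ) := by
    intro K hK
    simp only [hf_def]
    rw [show (m:ℚ) - 1 + (K:ℚ) = (((m - 1 + K : ℤ)):ℚ) by push_cast; ring]
    rw [gbc_intCast_neg _ _ (by omega : m - 1 + (K:ℤ) < 0)]
    rw [show ((n:ℤ) - 1 - (m - 1 + K)).toNat = n + a - K from by omega]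
    rw [← mul_assoc, hsgn, one_mul]
  have hf_mid : ∀ K : ℕ, a < K → K ≤ n + a → f K = 0 := by
    intro K hK1 hK2
    simp only [hf_def]
    rw [show (m:ℚ) - 1 + (K:ℚ) = (((m - 1 + K : ℤ)):ℚ) by push_cast; ring]
    rw [gbc_intCast _ _ (by omega : (0:ℤ) ≤ m - 1 + K)]
    rw [show (m - 1 + (K:ℤ)).toNat = K - a - 1 from by omega]
    rw [Nat.choose_eq_zero_of_lt (by omega : K - a - 1 < n)]
    simp
  have hf_nonneg : ∀ K : ℕ, K ≤ n + a → 0 ≤ f K := by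
    intro K hK
    by_cases h : K ≤ a
    · rw [hf_low K h]; positivity
    · rw [hf_mid K (by omega) hK]
  have hf_pair : ∀ K : ℕ, K ≤ M → n + 1 + a ≤ K → 0 ≤ f K + f (M - K) := by
    intro K hKM hK
    have e1 : f K = (-1:ℚ)^n * (((K - a - 1).choose n : ℕ) : ℚ) := by
      simp only [hf_def]
      rw [show (m:ℚ) - 1 + (K:ℚ) = (((m - 1 + K : ℤ)):ℚ) by push_cast; ring]
      rw [gbc_intCast _ _ (by omega : (0:ℤ) ≤ m - 1 + K)]
      rw [show (m - 1 + (K:ℤ)).toNat = K - a - 1 from by omega]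
    have e2 : f (M - K) = (((K - a' - 1).choose n : ℕ) : ℚ) := by
      simp only [hf_def]
      rw [show (m:ℚ) - 1 + ((M - K:ℕ):ℚ) = (((m - 1 + ((M - K : ℕ):ℤ) : ℤ)):ℚ) by
        push_cast; ring]
      rw [gbc_intCast_neg _ _ (by omega : m - 1 + ((M - K:ℕ):ℤ) < 0)]
      rw [show ((n:ℤ) - 1 - (m - 1 + ((M - K:ℕ):ℤ))).toNat = K - a' - 1 from by omega]
      rw [← mul_assoc, hsgn, one_mul]
    rw [e1, e2, add_comm]
    exact neg_one_pow_bound n _ _ (by positivity)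
      (by exact_mod_cast Nat.choose_le_choose n (by omega : K - a - 1 ≤ K - a' - 1))
  -- sums over ranges
  have hG1 : ∑ J ∈ range (a+1), f J = (((n+1+a).choose (n+1) : ℕ) : ℚ) := by
    have hcalc : ∑ J ∈ range (a+1), f J
        = (-1:ℚ)^n * (gbc (((m:ℚ)-1) + ((a+1:ℕ):ℚ)) (n+1) - gbc ((m:ℚ)-1) (n+1)) := by
      rw [← gbc_telescope_s13 ((m:ℚ)-1) n (a+1), Finset.mul_sum]
      try exact Finset.sum_congr rfl (fun J _ => by simp only [hf_def])
    have h0 : ((m:ℚ)-1) + ((a+1:ℕ):ℚ) = (((0:ℕ)):ℚ) := by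
      have haQ : ((a:ℕ):ℚ) = ((-m:ℤ):ℚ) := by exact_mod_cast congrArg (fun z : ℤ => (z:ℚ)) ha
      push_cast at haQ ⊢
      linarith
    have h1 : gbc ((m:ℚ)-1) (n+1) = (-1:ℚ)^(n+1) * (((n+1+a).choose (n+1) : ℕ) : ℚ) := by
      rw [show (m:ℚ) - 1 = ((m - 1 : ℤ):ℚ) by push_cast; ring]
      rw [gbc_intCast_neg _ _ (by omega : m - 1 < 0)]
      rw [show (((n+1:ℕ):ℤ) - 1 - (m - 1)).toNat = n + 1 + a from by omega]
    rw [hcalc, h0, gbc_natCast_s13, Nat.choose_eq_zero_of_lt (by omega), h1]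
    push_cast
    linear_combination (((n+1+a).choose (n+1) : ℕ) : ℚ) * hsgn
  have hG2 : ∑ J ∈ range (a'+1), f (M - J)
      = (-1:ℚ)^n * (((n+1+a').choose (n+1) : ℕ) : ℚ) := by
    have hterm : ∀ J ∈ range (a'+1),
        f (M - J) = (-1:ℚ)^n * gbc ((n:ℚ) + (((a' - J:ℕ)):ℚ)) n := by
      intro J hJ
      rw [Finset.mem_range] at hJ
      simp only [hf_def]
      congr 1
      have hZ : (m - 1 + ((M - J:ℕ):ℤ)) = ((n:ℕ):ℤ) + ((a' - J:ℕ):ℤ) := by omega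
      calc gbc ((m:ℚ) - 1 + ((M - J:ℕ):ℚ)) n
          = gbc (((m - 1 + ((M - J:ℕ):ℤ) : ℤ)):ℚ) n := by norm_cast
        _ = gbc ((((((n:ℕ):ℤ) + ((a' - J:ℕ):ℤ)) : ℤ)):ℚ) n := by rw [hZ]
        _ = gbc ((n:ℚ) + (((a' - J:ℕ)):ℚ)) n := by push_cast; ring_nf
    rw [Finset.sum_congr rfl hterm]
    have hrefl := Finset.sum_range_reflect (fun i => (-1:ℚ)^n * gbc ((n:ℚ) + (i:ℚ)) n) (a'+1)
    simp only [Nat.add_sub_cancel] at hrefl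
    rw [hrefl, ← Finset.mul_sum, gbc_telescope_s13 (n:ℚ) n (a'+1)]
    have h2 : gbc ((n:ℚ)) (n+1) = 0 := by
      rw [gbc_natCast_s13, Nat.choose_eq_zero_of_lt (by omega)]
      simp
    have h3 : (n:ℚ) + ((a'+1:ℕ):ℚ) = (((n+1+a':ℕ)):ℚ) := by push_cast; ring
    rw [h2, h3, gbc_natCast_s13]
    ring
  -- tuples
  have haM : a ≤ M := by omega
  set τ : ℕ → (Fin r → ℕ) := fun J => tup r e J with hτ_def
  have hτsum : ∀ J, J ≤ M → ∑ i, τ J i = J := fun J hJ => tup_sum r e J hJ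
  set σ : (Fin r → ℕ) → (Fin r → ℕ) := fun j i => e i - j i with hσ_def
  have hmemP : ∀ j : Fin r → ℕ, j ∈ P ↔ ∀ i, j i < D i := by
    intro j; rw [hP_def, Fintype.mem_piFinset]; simp
  have hjle : ∀ j : Fin r → ℕ, j ∈ P → ∀ i, j i ≤ e i := by
    intro j hj i; have := (hmemP j).1 hj i; have := hD2 i; simp only [he_def]; omega
  have hsumle : ∀ j : Fin r → ℕ, j ∈ P → ∑ i, j i ≤ M := by
    intro j hj; exact Finset.sum_le_sum (fun i _ => hjle j hj i)
  have hσP : ∀ j : Fin r → ℕ, j ∈ P → σ j ∈ P := by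
    intro j hj
    rw [hmemP]; intro i
    have := hD2 i
    simp only [hσ_def, he_def]; omega
  have hσσ : ∀ j : Fin r → ℕ, j ∈ P → σ (σ j) = j := by
    intro j hj; funext i; have := hjle j hj i; simp only [hσ_def]; omega
  have hσsum : ∀ j : Fin r → ℕ, j ∈ P → ∑ i, σ j i = M - ∑ i, j i := by
    intro j hj
    have h1 : ∀ i : Fin r, σ j i + j i = e i := by
      intro i; have := hjle j hj i; simp only [hσ_def]; omega
    have h2 : ∑ i, σ j i + ∑ i, j i = M := by
      rw [hM_def, ← Finset.sum_add_distrib]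
      exact Finset.sum_congr rfl (fun i _ => h1 i)
    omega
  have hτP : ∀ J, J ≤ M → τ J ∈ P := by
    intro J hJ; rw [hmemP]; intro i
    have h1 := tup_le r e J i
    have := hD2 i
    simp only [hτ_def, he_def] at *; omega
  set A : Finset (Fin r → ℕ) := (range (a+1)).image τ with hA_def
  set B : Finset (Fin r → ℕ) := (range (a'+1)).image (fun J => σ (τ J)) with hB_def
  have hAP : A ⊆ P := by
    intro j hj
    rw [hA_def, Finset.mem_image] at hj
    obtain ⟨J, hJ, rfl⟩ := hj
    exact hτP J (by rw [Finset.mem_range] at hJ; omega)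
  have hBP : B ⊆ P := by
    intro j hj
    rw [hB_def, Finset.mem_image] at hj
    obtain ⟨J, hJ, rfl⟩ := hj
    exact hσP _ (hτP J (by rw [Finset.mem_range] at hJ; omega))
  have hAsum : ∀ j ∈ A, ∑ i, j i ≤ a := by
    intro j hj
    rw [hA_def, Finset.mem_image] at hj
    obtain ⟨J, hJ, rfl⟩ := hj
    rw [Finset.mem_range] at hJ
    rw [hτsum J (by omega)]; omega
  have hBsum : ∀ j ∈ B, n+1+a ≤ ∑ i, j i := by
    intro j hj
    rw [hB_def, Finset.mem_image] at hj
    obtain ⟨J, hJ, rfl⟩ := hj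
    rw [Finset.mem_range] at hJ
    have hJM : J ≤ M := by omega
    rw [hσsum _ (hτP J hJM), hτsum J hJM]
    omega
  have hAB : Disjoint A B := by
    rw [Finset.disjoint_left]
    intro j hjA hjB
    have := hAsum j hjA
    have := hBsum j hjB
    omega
  have hsumA : ∑ j ∈ A, f (∑ i, j i) = ∑ J ∈ range (a+1), f J := by
    rw [hA_def, Finset.sum_image]
    · exact Finset.sum_congr rfl (fun J hJ => by
        rw [Finset.mem_range] at hJ; rw [hτsum J (by omega)])
    · intro J1 h1 J2 h2 hh
      rw [Finset.mem_coe, Finset.mem_range] at h1 h2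
      have := hτsum J1 (by omega)
      have := hτsum J2 (by omega)
      rw [hh] at *
      omega
  have hsumB : ∑ j ∈ B, f (∑ i, j i) = ∑ J ∈ range (a'+1), f (M - J) := by
    rw [hB_def, Finset.sum_image]
    · refine Finset.sum_congr rfl (fun J hJ => ?_)
      rw [Finset.mem_range] at hJ
      have hJM : J ≤ M := by omega
      rw [hσsum _ (hτP J hJM), hτsum J hJM]
    · intro J1 h1 J2 h2 hh
      rw [Finset.mem_coe, Finset.mem_range] at h1 h2
      have e1 : ∑ i, σ (τ J1) i = M - J1 := by
        rw [hσsum _ (hτP J1 (by omega)), hτsum J1 (by omega)]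
      have e2 : ∑ i, σ (τ J2) i = M - J2 := by
        rw [hσsum _ (hτP J2 (by omega)), hτsum J2 (by omega)]
      rw [show σ (τ J1) = σ (τ J2) from hh] at e1
      rw [e2] at e1
      omega
  -- the rest is nonnegative
  set R : Finset (Fin r → ℕ) := P \ (A ∪ B) with hR_def
  have hRP : R ⊆ P := Finset.sdiff_subset
  have hrest : 0 ≤ ∑ j ∈ R, f (∑ i, j i) := by
    set p : (Fin r → ℕ) → Prop := fun j => n+1+a ≤ ∑ i, j i with hp_def
    set Neg : Finset (Fin r → ℕ) := R.filter p with hNeg_def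
    have hNegR : Neg ⊆ R := Finset.filter_subset _ _
    set σNeg : Finset (Fin r → ℕ) := Neg.image σ with hσNeg_def
    have hNegFacts : ∀ x ∈ Neg, x ∈ P ∧ n+1+a ≤ ∑ i, x i ∧ x ∉ A ∧ x ∉ B := by
      intro x hx
      rw [hNeg_def, Finset.mem_filter] at hx
      obtain ⟨hxR, hxbig⟩ := hx
      have hxP := hRP hxR
      rw [hR_def, Finset.mem_sdiff] at hxR
      have hnAB := hxR.2
      rw [Finset.mem_union] at hnAB
      push_neg at hnAB
      exact ⟨hxP, hxbig, hnAB.1, hnAB.2⟩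
    have hσNeg_sub : σNeg ⊆ R \ Neg := by
      intro j hj
      rw [hσNeg_def, Finset.mem_image] at hj
      obtain ⟨x, hx, rfl⟩ := hj
      obtain ⟨hxP, hxbig, hxA, hxB⟩ := hNegFacts x hx
      have hσxP : σ x ∈ P := hσP x hxP
      have hσxsum : ∑ i, σ x i = M - ∑ i, x i := hσsum x hxP
      have hxM := hsumle x hxP
      have hsmall : ∑ i, σ x i ≤ a' := by omega
      rw [Finset.mem_sdiff]
      constructor
      · rw [hR_def, Finset.mem_sdiff]
        refine ⟨hσxP, ?_⟩
        rw [Finset.mem_union]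
        rintro (hA' | hB')
        · rw [hA_def, Finset.mem_image] at hA'
          obtain ⟨J0, hJ0, hEq⟩ := hA'
          rw [Finset.mem_range] at hJ0
          have hsJ0 : ∑ i, σ x i = J0 := by rw [← hEq, hτsum J0 (by omega)]
          have hxB' : x ∈ B := by
            rw [hB_def, Finset.mem_image]
            exact ⟨J0, Finset.mem_range.2 (by omega), by rw [hEq, hσσ x hxP]⟩
          exact hxB hxB'
        · have := hBsum _ hB'
          omega
      · rw [hNeg_def, Finset.mem_filter, hp_def]
        rintro ⟨-, hbig⟩
        omega
    have hsum_σNeg : ∑ j ∈ σNeg, f (∑ i, j i) = ∑ j ∈ Neg, f (M - ∑ i, j i) := by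
      rw [hσNeg_def, Finset.sum_image]
      · refine Finset.sum_congr rfl (fun x hx => ?_)
        rw [hσsum x (hNegFacts x hx).1]
      · intro x hx y hy hxy
        have h1 := hσσ x (hNegFacts x hx).1
        have h2 := hσσ y (hNegFacts y hy).1
        rw [← h1, ← h2, hxy]
    have hNegPair : 0 ≤ ∑ j ∈ Neg, f (∑ i, j i) + ∑ j ∈ σNeg, f (∑ i, j i) := by
      rw [hsum_σNeg, ← Finset.sum_add_distrib]
      apply Finset.sum_nonneg
      intro x hx
      obtain ⟨hxP, hxbig, -, -⟩ := hNegFacts x hx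
      exact hf_pair _ (hsumle x hxP) hxbig
    have hsplitR : ∑ j ∈ R, f (∑ i, j i)
        = ∑ j ∈ Neg, f (∑ i, j i) + ∑ j ∈ R \ Neg, f (∑ i, j i) := by
      rw [← Finset.sum_sdiff hNegR]; ring
    have hmono : ∑ j ∈ σNeg, f (∑ i, j i) ≤ ∑ j ∈ R \ Neg, f (∑ i, j i) := by
      apply Finset.sum_le_sum_of_subset_of_nonneg hσNeg_sub
      intro j hj _
      have hjR : j ∈ R := (Finset.mem_sdiff.1 hj).1
      have hjNeg : j ∉ Neg := (Finset.mem_sdiff.1 hj).2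
      have hjP := hRP hjR
      have : ¬ (n+1+a ≤ ∑ i, j i) := by
        intro hcon
        exact hjNeg (by rw [hNeg_def, Finset.mem_filter]; exact ⟨hjR, hcon⟩)
      exact hf_nonneg _ (by omega)
    linarith
  -- final assembly
  have hsplit : ∑ j ∈ P, f (∑ i, j i)
      = (∑ j ∈ A, f (∑ i, j i) + ∑ j ∈ B, f (∑ i, j i)) + ∑ j ∈ R, f (∑ i, j i) := by
    rw [hR_def, ← Finset.sum_union hAB, Finset.sum_sdiff_eq_sub (Finset.union_subset hAP hBP)]
    ring
  have htarget1 : gbc ((n : ℚ) + 1 - t * ((n : ℚ) + r + 1 - ∑ i, (d i : ℚ))) (n + 1)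
      = (((n+1+a).choose (n+1) : ℕ) : ℚ) := by
    rw [hm]
    rw [show (n:ℚ) + 1 - (m:ℚ) = (((n+1+a : ℕ) : ℤ) : ℚ) by push_cast [ha]; push_cast; ring]
    rw [show ((((n+1+a : ℕ) : ℤ)) : ℚ) = (((n+1+a:ℕ)):ℚ) by push_cast; ring]
    exact gbc_natCast_s13 _ _
  have htarget2 : gbc ((n : ℚ) + 1 - (1 - t) * ((n : ℚ) + r + 1 - ∑ i, (d i : ℚ))) (n + 1)
      = (((n+1+a').choose (n+1) : ℕ) : ℚ) := by
    have h1t : (1 - t) * ((n : ℚ) + r + 1 - ∑ i, (d i : ℚ)) = ((c:ℤ):ℚ) - (m:ℚ) := by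
      rw [← hcQ] at hm ⊢; rw [← hm]; ring
    rw [h1t]
    rw [show (n:ℚ) + 1 - (((c:ℤ):ℚ) - (m:ℚ)) = (((n+1+a' : ℕ) : ℤ) : ℚ) by
      push_cast [ha']; push_cast; ring]
    rw [show ((((n+1+a' : ℕ) : ℤ)) : ℚ) = (((n+1+a':ℕ)):ℚ) by push_cast; ring]
    exact gbc_natCast_s13 _ _
  rw [htarget1, htarget2, step1, hsplit, ← hG1, ← hG2, ← hsumA, ← hsumB]
  linarith [hrest]
end
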